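/- Let 0<α<1 and let ρ(t)=Γ(t+1)/Γ(t+1−α) for t∈(−1,∞) (with ρ(α−1)=0, the value at the pole of the denominator, and with Γ(t+1−α) for −1<t<α−1 understood as the value of the meromorphically continued Gamma function). Let γ:ℝ→(−1,∞) be the inverse function of ρ. Let A(z)=Σ_{m=0}^∞ A_m z^m be a power series of n×n complex matrices with positive radius of convergence, where A_0 = diag(λ_1,…,λ_n) with λ_1,…,λ_n ∈ ℝ. Assume the good spectrum condition: γ(λ_j) − γ(λ_i) ∉ {αk : k∈ℕ, k≥1} for all i,j∈{1,…,n}. For k≥0 put R_k = diag(ρ(γ(λ_1)+αk),…,ρ(γ(λ_n)+αk)). Then there exists a unique sequence of n×n matrices σ_0=I, σ_1, σ_2, … satisfying σ_k R_k − A_0 σ_k = Σ_{l=0}^{k−1} A_{k−l} σ_l for all k≥1, and the power series S(z)=Σ_{ν=0}^∞ σ_ν z^ν has a positive radius of convergence. -/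

import Mathlib

attribute [local instance]
  Matrix.linftyOpNormedAddCommGroup Matrix.linftyOpNormedRing

/-- The function `ρ(t) = Γ(t+1)/Γ(t+1-α)`; here `Real.Gamma` is the meromorphically
continued Gamma function (vanishing at its poles), so that `ρ(α-1) = 0` automatically. -/
noncomputable def rhoGamma (α t : ℝ) : ℝ :=
  Real.Gamma (t + 1) / Real.Gamma (t + 1 - α)

open MeasureTheory Set Filter
open scoped NNReal

namespace FrobAux

/-! ### The real Beta function and strict monotonicity of `rhoGamma` -/

/-- Real Beta function as an interval integral. -/
noncomputable def rBeta (x y : ℝ) : ℝ :=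
  ∫ s in (0:ℝ)..1, s ^ (x - 1) * (1 - s) ^ (y - 1)

lemma complex_betaIntegral_ofReal (x y : ℝ) :
    Complex.betaIntegral (x : ℂ) (y : ℂ) = ((rBeta x y : ℝ) : ℂ) := by
  rw [Complex.betaIntegral, rBeta, ← intervalIntegral.integral_ofReal]
  refine intervalIntegral.integral_congr fun s hs => ?_
  rw [Set.uIcc_of_le (by norm_num : (0:ℝ) ≤ 1)] at hs
  obtain ⟨hs0, hs1⟩ := hs
  have e1 : ((s:ℂ)) ^ ((x:ℂ) - 1) = ((s ^ (x - 1) : ℝ) : ℂ) := by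
    rw [show ((x:ℂ) - 1) = ((x - 1 : ℝ) : ℂ) by push_cast; ring, ← Complex.ofReal_cpow hs0]
  have e2 : ((1 - (s:ℂ))) ^ ((y:ℂ) - 1) = (((1 - s) ^ (y - 1) : ℝ) : ℂ) := by
    rw [show ((y:ℂ) - 1) = ((y - 1 : ℝ) : ℂ) by push_cast; ring,
      show (1 - (s:ℂ)) = ((1 - s : ℝ) : ℂ) by push_cast; ring,
      ← Complex.ofReal_cpow (by linarith)]
  rw [e1, e2, ← Complex.ofReal_mul]

lemma Gamma_mul_Gamma_eq (x y : ℝ) (hx : 0 < x) (hy : 0 < y) :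
    Real.Gamma x * Real.Gamma y = Real.Gamma (x + y) * rBeta x y := by
  have h := Complex.Gamma_mul_Gamma_eq_betaIntegral (s := (x:ℂ)) (t := (y:ℂ))
    (by simpa using hx) (by simpa using hy)
  rw [complex_betaIntegral_ofReal] at h
  have h2 : ((Real.Gamma x * Real.Gamma y : ℝ) : ℂ)
      = ((Real.Gamma (x + y) * rBeta x y : ℝ) : ℂ) := by
    push_cast
    rw [← Complex.Gamma_ofReal, ← Complex.Gamma_ofReal, ← Complex.Gamma_ofReal]
    push_cast at h ⊢
    exact h
  exact_mod_cast h2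

lemma rBeta_eq (x y : ℝ) (hx : 0 < x) (hy : 0 < y) :
    rBeta x y = Real.Gamma x * Real.Gamma y / Real.Gamma (x + y) := by
  rw [Gamma_mul_Gamma_eq x y hx hy]
  field_simp [(Real.Gamma_pos_of_pos (by positivity : (0:ℝ) < x + y)).ne']

lemma rBeta_pos (x y : ℝ) (hx : 0 < x) (hy : 0 < y) : 0 < rBeta x y := by
  rw [rBeta_eq x y hx hy]
  have := Real.Gamma_pos_of_pos hx
  have := Real.Gamma_pos_of_pos hy
  have := Real.Gamma_pos_of_pos (by positivity : (0:ℝ) < x + y)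
  positivity

lemma rBeta_integrable (x y : ℝ) (hx : 0 < x) (hy : 0 < y) :
    IntervalIntegrable (fun s : ℝ => s ^ (x - 1) * (1 - s) ^ (y - 1)) volume 0 1 := by
  have h := Complex.betaIntegral_convergent (u := (x:ℂ)) (v := (y:ℂ))
    (by simpa using hx) (by simpa using hy)
  have hre : IntervalIntegrable
      (fun s : ℝ => ((s:ℂ) ^ ((x:ℂ) - 1) * (1 - (s:ℂ)) ^ ((y:ℂ) - 1)).re) volume 0 1 :=
    ⟨h.1.re, h.2.re⟩
  apply hre.congr
  intro s hs
  beta_reduce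
  rw [Set.uIoc_of_le (by norm_num : (0:ℝ) ≤ 1)] at hs
  obtain ⟨hs0, hs1⟩ := hs
  have e1 : ((s:ℂ)) ^ ((x:ℂ) - 1) = ((s ^ (x - 1) : ℝ) : ℂ) := by
    rw [show ((x:ℂ) - 1) = ((x - 1 : ℝ) : ℂ) by push_cast; ring, ← Complex.ofReal_cpow hs0.le]
  have e2 : ((1 - (s:ℂ))) ^ ((y:ℂ) - 1) = (((1 - s) ^ (y - 1) : ℝ) : ℂ) := by
    rw [show ((y:ℂ) - 1) = ((y - 1 : ℝ) : ℂ) by push_cast; ring,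
      show (1 - (s:ℂ)) = ((1 - s : ℝ) : ℂ) by push_cast; ring,
      ← Complex.ofReal_cpow (by linarith)]
  rw [e1, e2, ← Complex.ofReal_mul, Complex.ofReal_re]

lemma rBeta_strictAnti (y : ℝ) (hy : 0 < y) {x₁ x₂ : ℝ} (h1 : 0 < x₁) (h12 : x₁ < x₂) :
    rBeta x₂ y < rBeta x₁ y := by
  have h2 : 0 < x₂ := h1.trans h12
  have hint1 := rBeta_integrable x₁ y h1 hy
  have hint2 := rBeta_integrable x₂ y h2 hy
  have key : 0 < ∫ s in (0:ℝ)..1,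
      (s ^ (x₁ - 1) * (1 - s) ^ (y - 1) - s ^ (x₂ - 1) * (1 - s) ^ (y - 1)) := by
    apply intervalIntegral.intervalIntegral_pos_of_pos_on (hint1.sub hint2)
    · intro s hs
      obtain ⟨hs0, hs1⟩ := hs
      have hlt : s ^ (x₂ - 1) < s ^ (x₁ - 1) :=
        Real.rpow_lt_rpow_of_exponent_gt hs0 hs1 (by linarith)
      have hpos : (0:ℝ) < (1 - s) ^ (y - 1) := Real.rpow_pos_of_pos (by linarith) _
      nlinarith
    · norm_num
  rw [intervalIntegral.integral_sub hint1 hint2] at key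
  unfold rBeta
  linarith

variable {α : ℝ} (hα : 0 < α) (hα1 : α < 1)

lemma Gamma_neg_of_neg {x : ℝ} (h1 : -1 < x) (h2 : x < 0) : Real.Gamma x < 0 := by
  have hx : x ≠ 0 := h2.ne
  have h := Real.Gamma_add_one hx
  have hpos : 0 < Real.Gamma (x + 1) := Real.Gamma_pos_of_pos (by linarith)
  nlinarith [h]

lemma Gamma_ne_zero_of_neg_one_lt {x : ℝ} (h1 : -1 < x) (h0 : x ≠ 0) : Real.Gamma x ≠ 0 := by
  rcases lt_or_gt_of_ne h0 with h | h
  · exact (Gamma_neg_of_neg h1 h).ne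
  · exact (Real.Gamma_pos_of_pos h).ne'

include hα in
lemma rho_pos_high {t : ℝ} (h : α - 1 < t) : 0 < rhoGamma α t := by
  have h1 : 0 < t + 1 := by linarith
  have h2 : 0 < t + 1 - α := by linarith
  exact div_pos (Real.Gamma_pos_of_pos h1) (Real.Gamma_pos_of_pos h2)

lemma rho_zero : rhoGamma α (α - 1) = 0 := by
  unfold rhoGamma
  rw [show α - 1 + 1 - α = 0 by ring, Real.Gamma_zero, div_zero]

include hα1 in
lemma rho_neg_low {t : ℝ} (h1 : -1 < t) (h2 : t < α - 1) : rhoGamma α t < 0 := by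
  have ha : 0 < Real.Gamma (t + 1) := Real.Gamma_pos_of_pos (by linarith)
  have hb : Real.Gamma (t + 1 - α) < 0 :=
    Gamma_neg_of_neg (by linarith) (by linarith)
  exact div_neg_of_pos_of_neg ha hb

include hα1 in
lemma rho_formula_low {t : ℝ} (h1 : -1 < t) (ht : t ≠ α - 1) :
    rhoGamma α t = (t + 1 - α) * rBeta (t + 1) (1 - α) / Real.Gamma (1 - α) := by
  have hx : 0 < t + 1 := by linarith
  have hy : 0 < 1 - α := by linarith
  have hB := Gamma_mul_Gamma_eq (t + 1) (1 - α) hx hy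
  rw [show t + 1 + (1 - α) = (t + 1 - α) + 1 by ring] at hB
  have hne : t + 1 - α ≠ 0 := fun hc => ht (by linarith)
  have hrec : Real.Gamma (t + 1 - α + 1) = (t + 1 - α) * Real.Gamma (t + 1 - α) :=
    Real.Gamma_add_one hne
  rw [hrec] at hB
  have hΓne : Real.Gamma (t + 1 - α) ≠ 0 :=
    Gamma_ne_zero_of_neg_one_lt (by linarith) hne
  have hΓy : Real.Gamma (1 - α) ≠ 0 := (Real.Gamma_pos_of_pos hy).ne'
  unfold rhoGamma
  field_simp
  linarith [hB]

include hα in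
lemma rho_formula_high {t : ℝ} (h : α - 1 < t) :
    rhoGamma α t = Real.Gamma α / rBeta (t + 1 - α) α := by
  have hx : 0 < t + 1 - α := by linarith
  have hB := Gamma_mul_Gamma_eq (t + 1 - α) α hx hα
  rw [show t + 1 - α + α = t + 1 by ring] at hB
  have h1 : Real.Gamma (t + 1 - α) ≠ 0 := (Real.Gamma_pos_of_pos hx).ne'
  have h2 : rBeta (t + 1 - α) α ≠ 0 := (rBeta_pos _ _ hx hα).ne'
  unfold rhoGamma
  field_simp
  linarith [hB]

include hα hα1 in
lemma rho_strictMonoOn : StrictMonoOn (rhoGamma α) (Ioi (-1 : ℝ)) := by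
  intro s hs t ht hst
  simp only [mem_Ioi] at hs ht
  rcases lt_trichotomy t (α - 1) with htl | hte | htg
  · have hsl : s < α - 1 := hst.trans htl
    rw [rho_formula_low hα1 hs hsl.ne, rho_formula_low hα1 ht htl.ne]
    have hc : 0 < Real.Gamma (1 - α) := Real.Gamma_pos_of_pos (by linarith)
    apply div_lt_div_of_pos_right ?_ hc
    have hBs : 0 < rBeta (s + 1) (1 - α) := rBeta_pos _ _ (by linarith) (by linarith)
    have hBt : 0 < rBeta (t + 1) (1 - α) := rBeta_pos _ _ (by linarith) (by linarith)
    have hanti : rBeta (t + 1) (1 - α) < rBeta (s + 1) (1 - α) :=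
      rBeta_strictAnti _ (by linarith) (by linarith) (by linarith)
    nlinarith
  · subst hte
    rw [rho_zero]
    exact rho_neg_low hα1 hs hst
  · rcases lt_trichotomy s (α - 1) with hsl | hse | hsg
    · exact (rho_neg_low hα1 hs hsl).trans (rho_pos_high hα htg)
    · subst hse
      rw [rho_zero]
      exact rho_pos_high hα htg
    · rw [rho_formula_high hα hsg, rho_formula_high hα htg]
      have hBs : 0 < rBeta (s + 1 - α) α := rBeta_pos _ _ (by linarith) hα
      have hBt : 0 < rBeta (t + 1 - α) α := rBeta_pos _ _ (by linarith) hα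
      have hanti : rBeta (t + 1 - α) α < rBeta (s + 1 - α) α :=
        rBeta_strictAnti _ hα (by linarith) (by linarith)
      exact div_lt_div_of_pos_left (Real.Gamma_pos_of_pos hα) hBt hanti

/-! ### The recursively defined coefficient matrices -/

/-- The coefficient matrices, defined by strong recursion. -/
noncomputable def frobSigma (n : ℕ) (A : ℕ → Matrix (Fin n) (Fin n) ℂ)
    (d : ℕ → Fin n → Fin n → ℂ) : ℕ → Matrix (Fin n) (Fin n) ℂ
  | 0 => 1
  | (m + 1) => Matrix.of fun i j =>
      (∑ l ∈ (Finset.range (m + 1)).attach,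
        A (m + 1 - l.1) * frobSigma n A d l.1) i j / d (m + 1) i j
  decreasing_by exact Finset.mem_range.mp l.2

lemma frobSigma_zero (n : ℕ) (A : ℕ → Matrix (Fin n) (Fin n) ℂ)
    (d : ℕ → Fin n → Fin n → ℂ) : frobSigma n A d 0 = 1 := by
  rw [frobSigma]

lemma frobSigma_succ_apply (n : ℕ) (A : ℕ → Matrix (Fin n) (Fin n) ℂ)
    (d : ℕ → Fin n → Fin n → ℂ) (m : ℕ) (i j : Fin n) :
    frobSigma n A d (m + 1) i j
      = (∑ l ∈ Finset.range (m + 1), A (m + 1 - l) * frobSigma n A d l) i j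
        / d (m + 1) i j := by
  rw [frobSigma, Matrix.of_apply,
    Finset.sum_attach (Finset.range (m + 1)) (fun l => A (m + 1 - l) * frobSigma n A d l)]

lemma entry_le_norm {n : ℕ} (M : Matrix (Fin n) (Fin n) ℂ) (i j : Fin n) :
    ‖M i j‖ ≤ ‖M‖ := by
  have h1 : ‖M i j‖₊ ≤ ‖M‖₊ := by
    rw [Matrix.linfty_opNNNorm_def]
    exact le_trans
      (Finset.single_le_sum (f := fun j' => ‖M i j'‖₊) (fun j' _ => zero_le)
        (Finset.mem_univ j))
      (Finset.le_sup (f := fun i => ∑ j', ‖M i j'‖₊) (Finset.mem_univ i))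
  exact_mod_cast NNReal.coe_le_coe.mpr h1

lemma norm_le_of_entries {n : ℕ} (M : Matrix (Fin n) (Fin n) ℂ) {c : ℝ} (hc : 0 ≤ c)
    (h : ∀ i j, ‖M i j‖ ≤ c) : ‖M‖ ≤ n * c := by
  have hnc : (0:ℝ) ≤ n * c := by positivity
  have key : ‖M‖₊ ≤ (n * c : ℝ).toNNReal := by
    rw [Matrix.linfty_opNNNorm_def]
    apply Finset.sup_le
    intro i _
    calc (∑ j, ‖M i j‖₊) ≤ ∑ _j : Fin n, Real.toNNReal c :=
          Finset.sum_le_sum fun j _ => by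
            rw [← NNReal.coe_le_coe, coe_nnnorm, Real.coe_toNNReal _ hc]; exact h i j
      _ = n • Real.toNNReal c := by
          rw [Finset.sum_const, Finset.card_univ, Fintype.card_fin]
      _ ≤ (n * c).toNNReal := by
          rw [← NNReal.coe_le_coe, NNReal.coe_nsmul, Real.coe_toNNReal _ hc,
            Real.coe_toNNReal _ hnc, nsmul_eq_mul]
  calc ‖M‖ = (‖M‖₊ : ℝ) := (coe_nnnorm M).symm
    _ ≤ ((n * c : ℝ).toNNReal : ℝ) := NNReal.coe_le_coe.mpr key
    _ = n * c := Real.coe_toNNReal _ hnc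

end FrobAux

/-- **Frobenius method for systems with good spectrum.**
Let `0 < α < 1`, let `γ : ℝ → (-1,∞)` be the inverse of `ρ`, and let
`A(z) = Σ A_m z^m` be a matrix power series with positive radius of convergence whose
constant term is `A₀ = diag(λ₁, …, λ_n)` with real `λᵢ`.  Assume the good spectrum
condition `γ(λⱼ) - γ(λᵢ) ∉ αℕ⁺`.  With `R_k = diag(ρ(γ(λᵢ) + αk))ᵢ`, there is a unique
sequence of matrices `σ₀ = I, σ₁, σ₂, …` with
`σ_k R_k - A₀ σ_k = Σ_{l<k} A_{k-l} σ_l` for all `k ≥ 1`, and the series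
`S(z) = Σ σ_ν z^ν` has positive radius of convergence. -/
theorem frobenius_good_spectrum
    (α : ℝ) (hα : 0 < α) (hα1 : α < 1) (n : ℕ) (hn : 1 ≤ n)
    (γ : ℝ → ℝ) (hγ : ∀ x : ℝ, -1 < γ x ∧ rhoGamma α (γ x) = x)
    (A : ℕ → Matrix (Fin n) (Fin n) ℂ)
    (hconv : ∃ M > (0 : ℝ), ∃ μ > (0 : ℝ), ∀ m : ℕ, ‖A m‖ ≤ M * μ ^ m)
    (lam : Fin n → ℝ)
    (hA0 : A 0 = Matrix.diagonal (fun i => (lam i : ℂ)))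
    (hgood : ∀ i j : Fin n, ∀ k : ℕ, 1 ≤ k → γ (lam j) - γ (lam i) ≠ α * k)
    (R : ℕ → Matrix (Fin n) (Fin n) ℂ)
    (hR : ∀ k : ℕ, R k = Matrix.diagonal (fun i => ((rhoGamma α (γ (lam i) + α * k) : ℝ) : ℂ))) :
    ∃ σ : ℕ → Matrix (Fin n) (Fin n) ℂ,
      (σ 0 = 1 ∧
        ∀ k : ℕ, 1 ≤ k → σ k * R k - A 0 * σ k = ∑ l ∈ Finset.range k, A (k - l) * σ l) ∧
      (∀ σ' : ℕ → Matrix (Fin n) (Fin n) ℂ,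
        (σ' 0 = 1 ∧
          ∀ k : ℕ, 1 ≤ k → σ' k * R k - A 0 * σ' k = ∑ l ∈ Finset.range k, A (k - l) * σ' l) →
        σ' = σ) ∧
      ∃ r > (0 : ℝ), Summable (fun ν : ℕ => ‖σ ν‖ * r ^ ν) := by
  obtain ⟨M, hM, μ, hμ, hA⟩ := hconv
  have hmono := FrobAux.rho_strictMonoOn hα hα1
  -- the real denominators
  set d : ℕ → Fin n → Fin n → ℝ :=
    fun k i j => rhoGamma α (γ (lam j) + α * k) - lam i with hd_def
  have harg : ∀ (j : Fin n) (k : ℕ), γ (lam j) + α * k ∈ Set.Ioi (-1 : ℝ) := by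
    intro j k
    have h1 := (hγ (lam j)).1
    have h2 : (0:ℝ) ≤ α * k := by positivity
    simp only [Set.mem_Ioi]
    linarith
  have hdne : ∀ k : ℕ, 1 ≤ k → ∀ i j, d k i j ≠ 0 := by
    intro k hk i j hzero
    have h1 : rhoGamma α (γ (lam j) + α * k) = rhoGamma α (γ (lam i)) := by
      rw [(hγ (lam i)).2]
      simp only [hd_def] at hzero
      linarith
    have h2 : γ (lam j) + α * k = γ (lam i) :=
      hmono.injOn (harg j k) (Set.mem_Ioi.mpr (hγ (lam i)).1) h1
    exact hgood j i k hk (by linarith)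
  set dC : ℕ → Fin n → Fin n → ℂ := fun k i j => ((d k i j : ℝ) : ℂ) with hdC_def
  have hdCne : ∀ k : ℕ, 1 ≤ k → ∀ i j, dC k i j ≠ 0 := fun k hk i j =>
    Complex.ofReal_ne_zero.mpr (hdne k hk i j)
  set σ : ℕ → Matrix (Fin n) (Fin n) ℂ := FrobAux.frobSigma n A dC with hσ_def
  have hσ0 : σ 0 = 1 := FrobAux.frobSigma_zero n A dC
  have hentry : ∀ k : ℕ, 1 ≤ k → ∀ i j,
      σ k i j * dC k i j = (∑ l ∈ Finset.range k, A (k - l) * σ l) i j := by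
    intro k hk i j
    obtain ⟨m, rfl⟩ : ∃ m, k = m + 1 := ⟨k - 1, by omega⟩
    rw [hσ_def, FrobAux.frobSigma_succ_apply]
    exact div_mul_cancel₀ _ (hdCne _ hk i j)
  have hdc_eq : ∀ k i j,
      dC k i j = ((rhoGamma α (γ (lam j) + α * k) : ℝ) : ℂ) - ((lam i : ℝ) : ℂ) := by
    intro k i j
    simp only [hdC_def, hd_def]
    push_cast
    ring
  have hmatEq : ∀ k : ℕ, 1 ≤ k →
      σ k * R k - A 0 * σ k = ∑ l ∈ Finset.range k, A (k - l) * σ l := by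
    intro k hk
    ext i j
    rw [Matrix.sub_apply, hR k, Matrix.mul_diagonal, hA0, Matrix.diagonal_mul,
      ← hentry k hk i j, hdc_eq k i j]
    ring
  refine ⟨σ, ⟨hσ0, hmatEq⟩, ?_, ?_⟩
  · -- uniqueness
    rintro σ' ⟨h0', heq'⟩
    funext k
    induction k using Nat.strong_induction_on with
    | _ k ih =>
      match k with
      | 0 => rw [h0', hσ0]
      | (m + 1) =>
        have hk1 : 1 ≤ m + 1 := by omega
        have e1 : ∀ i j, (σ' (m+1) * R (m+1) - A 0 * σ' (m+1)) i j
            = σ' (m+1) i j * dC (m+1) i j := by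
          intro i j
          rw [Matrix.sub_apply, hR (m+1), Matrix.mul_diagonal, hA0, Matrix.diagonal_mul,
            hdc_eq (m+1) i j]
          ring
        have hsum : (∑ l ∈ Finset.range (m+1), A (m+1-l) * σ' l)
            = ∑ l ∈ Finset.range (m+1), A (m+1-l) * σ l :=
          Finset.sum_congr rfl fun l hl => by rw [ih l (Finset.mem_range.mp hl)]
        ext i j
        have h2 := congrFun (congrFun (heq' (m+1) hk1) i) j
        rw [e1 i j, hsum] at h2
        have h3 := hentry (m+1) hk1 i j
        have := h2.trans h3.symm
        exact mul_right_cancel₀ (hdCne (m+1) hk1 i j) this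
  · -- summability
    have hn0 : (0:ℝ) < n := by exact_mod_cast hn
    have hnM : (0:ℝ) < n * M := by positivity
    -- eventually the denominators are large
    have hdbig : ∀ i j : Fin n, ∀ᶠ k : ℕ in atTop, (n:ℝ) * M ≤ d k i j := by
      intro i j
      have htend : Tendsto (fun k : ℕ => γ (lam j) + α * k) atTop atTop := by
        apply tendsto_atTop_add_const_left
        exact (tendsto_natCast_atTop_atTop (R := ℝ)).const_mul_atTop hα
      filter_upwards [htend.eventually_ge_atTop (γ (lam i + n * M))] with k hk
      have hx := hγ (lam i + n * M)
      have hle : rhoGamma α (γ (lam i + n * M)) ≤ rhoGamma α (γ (lam j) + α * k) := by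
        rcases eq_or_lt_of_le hk with he | hlt
        · rw [he]
        · exact (hmono (Set.mem_Ioi.mpr hx.1) (harg j k) hlt).le
      simp only [hd_def]
      rw [hx.2] at hle
      linarith
  -- gather over all pairs
    have hall : ∀ᶠ k : ℕ in atTop, ∀ i j : Fin n, (n:ℝ) * M ≤ d k i j :=
      Filter.eventually_all.mpr fun i => Filter.eventually_all.mpr fun j => hdbig i j
    obtain ⟨K0, hK0⟩ := Filter.eventually_atTop.mp hall
    set K : ℕ := max K0 1 with hK_def
    set q : ℝ := 2 * μ with hq_def
    have hq0 : 0 < q := by positivity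
    set C : ℝ := 1 + ∑ k ∈ Finset.range K, ‖σ k‖ / q ^ k with hC_def
    have hsum_nonneg : 0 ≤ ∑ k ∈ Finset.range K, ‖σ k‖ / q ^ k :=
      Finset.sum_nonneg fun k _ => by positivity
    have hC1 : (1:ℝ) ≤ C := by simp only [hC_def]; linarith
    have hC0 : (0:ℝ) < C := by linarith
    have hCk : ∀ k, k < K → ‖σ k‖ ≤ C * q ^ k := by
      intro k hk
      have h1 : ‖σ k‖ / q ^ k ≤ ∑ k' ∈ Finset.range K, ‖σ k'‖ / q ^ k' :=
        Finset.single_le_sum (f := fun k' => ‖σ k'‖ / q ^ k')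
          (fun k' _ => by positivity) (Finset.mem_range.mpr hk)
      have h2 : ‖σ k‖ / q ^ k ≤ C := by simp only [hC_def]; linarith
      calc ‖σ k‖ = (‖σ k‖ / q ^ k) * q ^ k := by field_simp
        _ ≤ C * q ^ k := by
            apply mul_le_mul_of_nonneg_right h2 (by positivity)
    have hbound : ∀ k, ‖σ k‖ ≤ C * q ^ k := by
      intro k
      induction k using Nat.strong_induction_on with
      | _ k ih =>
        rcases lt_or_ge k K with hk | hk
        · exact hCk k hk
        · have hk1 : 1 ≤ k := le_trans (le_max_right K0 1) hk
          obtain ⟨m, rfl⟩ : ∃ m, k = m + 1 := ⟨k - 1, by omega⟩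
          have hdk := hK0 (m + 1) (le_trans (le_max_left K0 1) hk)
          set B : Matrix (Fin n) (Fin n) ℂ :=
            ∑ l ∈ Finset.range (m+1), A (m+1-l) * σ l with hB_def
          have hBle : ‖B‖ ≤ M * C * q ^ (m+1) := by
            calc ‖B‖ ≤ ∑ l ∈ Finset.range (m+1), ‖A (m+1-l) * σ l‖ := norm_sum_le _ _
              _ ≤ ∑ l ∈ Finset.range (m+1), M * C * μ ^ (m+1) * 2 ^ l := by
                  apply Finset.sum_le_sum
                  intro l hl
                  have hl' := Finset.mem_range.mp hl
                  calc ‖A (m+1-l) * σ l‖ ≤ ‖A (m+1-l)‖ * ‖σ l‖ := norm_mul_le _ _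
                    _ ≤ (M * μ ^ (m+1-l)) * (C * q ^ l) := by
                        apply mul_le_mul (hA _) (ih l hl') (norm_nonneg _)
                        positivity
                    _ = M * C * (μ ^ (m+1-l) * μ ^ l) * 2 ^ l := by
                        rw [hq_def, mul_pow]
                        ring
                    _ = M * C * μ ^ (m+1) * 2 ^ l := by
                        rw [← pow_add, Nat.sub_add_cancel (by omega)]
              _ = M * C * μ ^ (m+1) * ∑ l ∈ Finset.range (m+1), 2 ^ l := by
                  rw [Finset.mul_sum]
              _ ≤ M * C * μ ^ (m+1) * 2 ^ (m+1) := by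
                  apply mul_le_mul_of_nonneg_left ?_ (by positivity)
                  have := geom_sum_eq (by norm_num : (2:ℝ) ≠ 1) (m+1)
                  rw [this]
                  norm_num
              _ = M * C * q ^ (m+1) := by rw [hq_def, mul_pow]; ring
          have hentry_le : ∀ i j, ‖σ (m+1) i j‖ ≤ ‖B‖ / ((n:ℝ) * M) := by
            intro i j
            rw [hσ_def, FrobAux.frobSigma_succ_apply, norm_div]
            apply div_le_div₀ (norm_nonneg B) ?_ hnM ?_
            · exact FrobAux.entry_le_norm B i j
            · calc (n:ℝ) * M ≤ d (m+1) i j := hdk i j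
                _ ≤ |d (m+1) i j| := le_abs_self _
                _ = ‖dC (m+1) i j‖ := by
                    rw [hdC_def, Complex.norm_real, Real.norm_eq_abs]
          have h1 : ‖σ (m+1)‖ ≤ n * (‖B‖ / ((n:ℝ) * M)) :=
            FrobAux.norm_le_of_entries _ (by positivity) hentry_le
          have h2 : (n:ℝ) * (‖B‖ / ((n:ℝ) * M)) = ‖B‖ / M := by
            field_simp
          calc ‖σ (m+1)‖ ≤ ‖B‖ / M := by rw [← h2]; exact h1
            _ ≤ (M * C * q ^ (m+1)) / M := by gcongr
            _ = C * q ^ (m+1) := by field_simp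
    refine ⟨1 / (4 * μ), by positivity, ?_⟩
    refine Summable.of_nonneg_of_le (fun ν => by positivity) (fun ν => ?_)
      ((summable_geometric_of_lt_one (r := (1/2 : ℝ)) (by norm_num) (by norm_num)).mul_left C)
    calc ‖σ ν‖ * (1 / (4 * μ)) ^ ν ≤ (C * q ^ ν) * (1 / (4 * μ)) ^ ν :=
            mul_le_mul_of_nonneg_right (hbound ν) (by positivity)
        _ = C * (q * (1 / (4 * μ))) ^ ν := by rw [mul_pow q (1 / (4 * μ)) ν]; ring
        _ = C * (1/2 : ℝ) ^ ν := by
            have : q * (1 / (4 * μ)) = 1/2 := by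
              rw [hq_def]; field_simp; ring
            rw [this]
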